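/- There exist real constants c₁, c₂ > 0 such that for every n ≥ 2 the number z of factors of the LZMW factorization of the unary string aⁿ satisfies c₁·log₂ n ≤ z ≤ c₂·log₂ n; hence the number of LZMW factors of aⁿ is Θ(log n). -/

import Mathlib

/-- The LZMW parsing dictionary available for the factor at (0-indexed) position `x`:
all concatenations of two consecutive factors both completed before position `x`,
together with all length-one strings. -/
def LZMWDict {α : Type*} (F : List (List α)) (x : ℕ) : Set (List α) :=
  { w | (∃ i, 1 ≤ i ∧ i < x ∧ w = F.getD (i - 1) [] ++ F.getD i []) ∨ (∃ c : α, w = [c]) }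

/-- `F` is the LZMW factorization of `T`: the factors concatenate to `T`, and each factor
is the longest prefix of the remaining text contained in the current LZMW dictionary. -/
def IsLZMW {α : Type*} (T : List α) (F : List (List α)) : Prop :=
  F.flatten = T ∧
  ∀ x < F.length,
    F.getD x [] ∈ LZMWDict F x ∧
    ∀ w ∈ LZMWDict F x, w <+: (F.drop x).flatten → w.length ≤ (F.getD x []).length

namespace LZMWProof

variable {α : Type*}

/-- Length of the `x`-th factor. -/
def LL (F : List (List α)) (x : ℕ) : ℕ := (F.getD x []).length

/-- Length of the remaining text before parsing the `x`-th factor. -/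
def rr (F : List (List α)) (x : ℕ) : ℕ := ((F.drop x).flatten).length

variable {a : α} {n : ℕ} {F : List (List α)}

lemma factor_repl (hT : F.flatten = List.replicate n a) {x : ℕ} (hx : x < F.length) :
    F.getD x [] = List.replicate (LL F x) a := by
  rw [List.eq_replicate_iff]
  refine ⟨rfl, fun b hb => ?_⟩
  have h1 : F.getD x [] ∈ F := by
    rw [List.getD_eq_getElem _ _ hx]; exact List.getElem_mem hx
  have hb2 : b ∈ F.flatten := List.mem_flatten.2 ⟨_, h1, hb⟩
  rw [hT] at hb2
  exact List.eq_of_mem_replicate hb2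

lemma drop_repl (hT : F.flatten = List.replicate n a) (x : ℕ) :
    (F.drop x).flatten = List.replicate (rr F x) a := by
  rw [List.eq_replicate_iff]
  refine ⟨rfl, fun b hb => ?_⟩
  rcases List.mem_flatten.1 hb with ⟨l, hl, hbl⟩
  have hb2 : b ∈ F.flatten := List.mem_flatten.2 ⟨l, List.mem_of_mem_drop hl, hbl⟩
  rw [hT] at hb2
  exact List.eq_of_mem_replicate hb2

lemma rr_succ {x : ℕ} (hx : x < F.length) : rr F x = LL F x + rr F (x + 1) := by
  unfold rr LL
  rw [List.drop_eq_getElem_cons hx, List.flatten_cons, List.length_append,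
    List.getD_eq_getElem _ _ hx]

lemma LL_le_rr {x : ℕ} (hx : x < F.length) : LL F x ≤ rr F x := by
  rw [rr_succ hx]; omega

lemma rr_le (hT : F.flatten = List.replicate n a) (x : ℕ) : rr F x ≤ n := by
  have h1 : F.flatten.length = n := by rw [hT, List.length_replicate]
  have h2 : F.flatten.length = (F.take x).flatten.length + (F.drop x).flatten.length := by
    conv_lhs => rw [← List.take_append_drop x F]
    rw [List.flatten_append, List.length_append]
  unfold rr
  omega

lemma mem_struct (hF : IsLZMW (List.replicate n a) F) {x : ℕ} (hx : x < F.length) :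
    LL F x = 1 ∨ ∃ i, 1 ≤ i ∧ i < x ∧ LL F x = LL F (i - 1) + LL F i := by
  rcases (hF.2 x hx).1 with ⟨i, h1, h2, heq⟩ | ⟨c, heq⟩
  · right; exact ⟨i, h1, h2, by unfold LL; rw [heq, List.length_append]⟩
  · left; unfold LL; rw [heq]; rfl

lemma LL_pos (hF : IsLZMW (List.replicate n a) F) :
    ∀ x, x < F.length → 1 ≤ LL F x := by
  intro x
  induction x using Nat.strong_induction_on with
  | _ x ih =>
    intro hx
    rcases mem_struct hF hx with h | ⟨i, h1, h2, h3⟩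
    · omega
    · have := ih (i - 1) (by omega) (by omega)
      omega

lemma maximal (hF : IsLZMW (List.replicate n a) F) {x i : ℕ} (hx : x < F.length)
    (hi1 : 1 ≤ i) (hi2 : i < x) (hle : LL F (i - 1) + LL F i ≤ rr F x) :
    LL F (i - 1) + LL F i ≤ LL F x := by
  have hw : (F.getD (i - 1) [] ++ F.getD i []).length ≤ (F.getD x []).length := by
    apply (hF.2 x hx).2
    · exact Or.inl ⟨i, hi1, hi2, rfl⟩
    · rw [factor_repl hF.1 (show i - 1 < F.length by omega),
        factor_repl hF.1 (show i < F.length by omega),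
        ← List.replicate_add, drop_repl hF.1]
      exact ⟨List.replicate (rr F x - (LL F (i - 1) + LL F i)) a, by
        rw [← List.replicate_add]; congr 1; omega⟩
  simpa [LL, List.length_append] using hw

lemma LL_le_pow (hF : IsLZMW (List.replicate n a) F) :
    ∀ x, x < F.length → LL F x ≤ 2 ^ x := by
  intro x
  induction x using Nat.strong_induction_on with
  | _ x ih =>
    intro hx
    rcases mem_struct hF hx with h | ⟨i, h1, h2, h3⟩
    · have : 1 ≤ 2 ^ x := Nat.one_le_two_pow
      omega
    · have ha := ih (i - 1) (by omega) (by omega)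
      have hb := ih i (by omega) (by omega)
      have hc : 2 ^ (i - 1) ≤ 2 ^ i := Nat.pow_le_pow_right (by omega) (by omega)
      have hd : 2 ^ i + 2 ^ i ≤ 2 ^ x := by
        have : 2 ^ (i + 1) ≤ 2 ^ x := Nat.pow_le_pow_right (by omega) (by omega)
        rw [pow_succ] at this
        omega
      omega

lemma rr_pow (hF : IsLZMW (List.replicate n a) F) :
    ∀ d x, x + d = F.length → rr F x + 2 ^ x ≤ 2 ^ F.length := by
  intro d
  induction d with
  | zero =>
    intro x hx
    have hx' : x = F.length := by omega
    subst hx'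
    have : rr F F.length = 0 := by simp [rr, List.drop_length]
    omega
  | succ d ih =>
    intro x hx
    have hxlt : x < F.length := by omega
    have h1 := rr_succ (F := F) hxlt
    have h2 := LL_le_pow hF x hxlt
    have h3 := ih (x + 1) (by omega)
    have h4 : 2 ^ x + 2 ^ x = 2 ^ (x + 1) := by rw [pow_succ]; omega
    omega

lemma dichotomy (hF : IsLZMW (List.replicate n a) F) {x : ℕ} (hx : x < F.length)
    (h2 : 2 ≤ x) :
    LL F (x - 2) + LL F (x - 1) ≤ LL F x ∨ rr F x < 2 * LL F x := by
  have e0 : x - 1 - 1 = x - 2 := by omega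
  by_cases hcase : LL F (x - 2) + LL F (x - 1) ≤ rr F x
  · left
    have h := maximal hF (i := x - 1) hx (by omega) (by omega) (by rw [e0]; exact hcase)
    rw [e0] at h
    exact h
  · right
    classical
    have hp : ∃ s, ∃ i, 1 ≤ i ∧ i < x ∧ s = LL F (i - 1) + LL F i ∧ rr F x < s :=
      ⟨LL F (x - 2) + LL F (x - 1), x - 1, by omega, by omega, by rw [e0], by omega⟩
    obtain ⟨i, hi1, hi2, hseq, hsgt⟩ := Nat.find_spec hp
    have hle1 : LL F (i - 1) ≤ max (LL F (i - 1)) (LL F i) := le_max_left _ _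
    have hle2 : LL F i ≤ max (LL F (i - 1)) (LL F i) := le_max_right _ _
    have p1 := LL_pos hF (i - 1) (by omega)
    have p2 := LL_pos hF i (by omega)
    have hmlt : max (LL F (i - 1)) (LL F i) < LL F (i - 1) + LL F i := by
      rcases max_choice (LL F (i - 1)) (LL F i) with h | h <;> rw [h] <;> omega
    obtain ⟨j0, hj0x, hj0m⟩ :
        ∃ j0, j0 < x ∧ max (LL F (i - 1)) (LL F i) = LL F j0 := by
      rcases max_choice (LL F (i - 1)) (LL F i) with h | h
      · exact ⟨i - 1, by omega, h⟩
      · exact ⟨i, by omega, h⟩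
    rcases mem_struct hF (show j0 < F.length by omega) with h1 | ⟨j, hj1, hj2, hjeq⟩
    · -- the max is 1, so rr F x ≤ 1
      have := LL_pos hF x hx
      omega
    · by_cases hmr : max (LL F (i - 1)) (LL F i) ≤ rr F x
      · have h := maximal hF (i := j) hx hj1 (by omega)
          (by rw [← hjeq, ← hj0m]; exact hmr)
        rw [← hjeq, ← hj0m] at h
        omega
      · exfalso
        have hfind : Nat.find hp ≤ max (LL F (i - 1)) (LL F i) :=
          Nat.find_min' hp ⟨j, hj1, by omega, by rw [hj0m, hjeq], by omega⟩
        omega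

lemma P_succ (hF : IsLZMW (List.replicate n a) F) {x : ℕ} (h2 : 2 ≤ x)
    (hx1 : x + 1 < F.length) (hP : rr F x < 2 * LL F x) :
    rr F (x + 1) < 2 * LL F (x + 1) := by
  have h1 := rr_succ (F := F) (show x < F.length by omega)
  rcases dichotomy hF hx1 (by omega) with hG | hH
  · exfalso
    have e1 : x + 1 - 2 = x - 1 := by omega
    have e2 : x + 1 - 1 = x := by omega
    rw [e1, e2] at hG
    have h3 := LL_le_rr (F := F) hx1
    have h4 := LL_pos hF (x - 1) (by omega)
    omega
  · exact hH

lemma P_chain (hF : IsLZMW (List.replicate n a) F) {w : ℕ} (h2 : 2 ≤ w)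
    (hPw : rr F w < 2 * LL F w) :
    ∀ j, w + j < F.length → rr F (w + j) < 2 * LL F (w + j) := by
  intro j
  induction j with
  | zero => intro _; simpa using hPw
  | succ j ih =>
    intro hj
    have hwj : w + j < F.length := by omega
    have e : w + (j + 1) = (w + j) + 1 := by omega
    rw [e]
    exact P_succ hF (by omega) (by omega) (ih hwj)

lemma halve (hF : IsLZMW (List.replicate n a) F) {w : ℕ} (h2 : 2 ≤ w)
    (hPw : rr F w < 2 * LL F w) :
    ∀ j, w + j < F.length → 2 ^ j * rr F (w + j) ≤ rr F w := by
  intro j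
  induction j with
  | zero => intro _; simp
  | succ j ih =>
    intro hj
    have hwj : w + j < F.length := by omega
    have hP := P_chain hF h2 hPw j hwj
    have h1 := rr_succ (F := F) hwj
    have h2' : 2 * rr F (w + j + 1) ≤ rr F (w + j) := by omega
    have h3 := ih hwj
    have e : w + (j + 1) = w + j + 1 := by omega
    rw [e]
    calc 2 ^ (j + 1) * rr F (w + j + 1) = 2 ^ j * (2 * rr F (w + j + 1)) := by ring
      _ ≤ 2 ^ j * rr F (w + j) := Nat.mul_le_mul_left _ h2'
      _ ≤ rr F w := h3

lemma growth (hF : IsLZMW (List.replicate n a) F) :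
    ∀ x, x + 1 < F.length →
      (∀ y, 2 ≤ y → y ≤ x + 1 → LL F (y - 2) + LL F (y - 1) ≤ LL F y) →
      2 ^ ((x + 2) / 2) ≤ LL F x + LL F (x + 1) := by
  intro x
  induction x using Nat.strong_induction_on with
  | _ x ih =>
    intro hx hG
    match x, hx, hG, ih with
    | 0, hx, hG, ih =>
      have p0 := LL_pos hF 0 (by omega)
      have p1 := LL_pos hF 1 (by omega)
      norm_num
      omega
    | 1, hx, hG, ih =>
      have p1 := LL_pos hF 1 (by omega)
      have p2 := LL_pos hF 2 (by omega)
      norm_num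
      omega
    | (k + 2), hx, hG, ih =>
      have hGa := hG (k + 3) (by omega) (by omega)
      have hGb := hG (k + 2) (by omega) (by omega)
      have ea1 : k + 3 - 2 = k + 1 := by omega
      have ea2 : k + 3 - 1 = k + 2 := by omega
      have eb1 : k + 2 - 2 = k := by omega
      have eb2 : k + 2 - 1 = k + 1 := by omega
      rw [ea1, ea2] at hGa
      rw [eb1, eb2] at hGb
      have hIH := ih k (by omega) (by omega) (fun y hy1 hy2 => hG y hy1 (by omega))
      have e : (k + 2 + 2) / 2 = (k + 2) / 2 + 1 := by omega
      rw [e, pow_succ, show k + 2 + 1 = k + 3 by omega]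
      calc 2 ^ ((k + 2) / 2) * 2 ≤ (LL F k + LL F (k + 1)) * 2 :=
            Nat.mul_le_mul_right _ hIH
        _ ≤ LL F (k + 2) + LL F (k + 3) := by omega

end LZMWProof

open LZMWProof in
/-- There are constants `c₁, c₂ > 0` such that for every `n ≥ 2` the number `z` of LZMW
factors of the unary string `aⁿ` satisfies `c₁·log₂ n ≤ z ≤ c₂·log₂ n`;
hence the number of LZMW factors of `aⁿ` is `Θ(log n)`. -/
theorem lzmw_unary_num_factors {α : Type*} (a : α) :
    ∃ c₁ c₂ : ℝ, 0 < c₁ ∧ 0 < c₂ ∧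
      ∀ (n : ℕ) (F : List (List α)), 2 ≤ n → IsLZMW (List.replicate n a) F →
        c₁ * Real.logb 2 n ≤ (F.length : ℝ) ∧
        (F.length : ℝ) ≤ c₂ * Real.logb 2 n := by
  refine ⟨1, 5, one_pos, by norm_num, ?_⟩
  intro n F hn hF
  have hT := hF.1
  have hn0 : rr F 0 = n := by simp [rr, hT]
  have hk1 : 1 ≤ Nat.log 2 n := Nat.log_pos one_lt_two hn
  -- lower bound : n < 2 ^ F.length
  have hlt : n < 2 ^ F.length := by
    have h := rr_pow hF F.length 0 (by omega)
    have : (2 : ℕ) ^ 0 = 1 := rfl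
    omega
  have hlow : Real.logb 2 n ≤ (F.length : ℝ) := by
    have h2 : (n : ℝ) ≤ (2 : ℝ) ^ F.length := by
      have : (n : ℝ) < (2 : ℝ) ^ F.length := by exact_mod_cast hlt
      linarith
    calc Real.logb 2 n ≤ Real.logb 2 ((2 : ℝ) ^ F.length) :=
          Real.logb_le_logb_of_le one_lt_two (by positivity) h2
      _ = (F.length : ℝ) := by
          rw [Real.logb_pow, Real.logb_self_eq_one (by norm_num)]
          ring
  -- upper bound : F.length ≤ 5 * Nat.log 2 n
  have hupper : F.length ≤ 5 * Nat.log 2 n := by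
    by_cases hz2 : F.length ≤ 2
    · omega
    · classical
      have hqex : ∃ y, 2 ≤ y ∧ y < F.length ∧ rr F y < 2 * LL F y := by
        refine ⟨F.length - 1, by omega, by omega, ?_⟩
        have h1 := rr_succ (F := F) (show F.length - 1 < F.length by omega)
        have h2 : rr F (F.length - 1 + 1) = 0 := by
          have e : F.length - 1 + 1 = F.length := by omega
          rw [e]; simp [rr, List.drop_length]
        have h3 := LL_pos hF (F.length - 1) (by omega)
        omega
      obtain ⟨hw2, hwz, hwP⟩ := Nat.find_spec hqex
      set w := Nat.find hqex with hwdef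
      have hGrow : ∀ y, 2 ≤ y → y ≤ (w - 2) + 1 →
          LL F (y - 2) + LL F (y - 1) ≤ LL F y := by
        intro y hy1 hy2
        have hylt : y < w := by omega
        have hnq := Nat.find_min hqex hylt
        have hyz : y < F.length := by omega
        rcases dichotomy hF hyz hy1 with h | h
        · exact h
        · exact absurd ⟨hy1, hyz, h⟩ hnq
      have hwk : w ≤ 2 * Nat.log 2 n + 1 := by
        have hgrow := growth hF (w - 2) (by omega) hGrow
        have e : w - 2 + 2 = w := by omega
        rw [e] at hgrow
        have hb : LL F (w - 2) + LL F (w - 2 + 1) ≤ n := by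
          have h1 := rr_succ (F := F) (show w - 2 < F.length by omega)
          have h2 := rr_succ (F := F) (show w - 2 + 1 < F.length by omega)
          have h3 := rr_le hT (w - 2)
          omega
        have hpow : 2 ^ (w / 2) ≤ n := le_trans hgrow hb
        have := (Nat.le_log_iff_pow_le one_lt_two (by omega)).2 hpow
        omega
      have htail : F.length - 1 - w ≤ Nat.log 2 n := by
        have hh := halve hF hw2 hwP (F.length - 1 - w) (by omega)
        have e : w + (F.length - 1 - w) = F.length - 1 := by omega
        rw [e] at hh
        have hr1 : 1 ≤ rr F (F.length - 1) :=
          le_trans (LL_pos hF (F.length - 1) (by omega))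
            (LL_le_rr (show F.length - 1 < F.length by omega))
        have hrw : rr F w ≤ n := rr_le hT w
        have hpow : 2 ^ (F.length - 1 - w) ≤ n := by
          calc 2 ^ (F.length - 1 - w) = 2 ^ (F.length - 1 - w) * 1 := by ring
            _ ≤ 2 ^ (F.length - 1 - w) * rr F (F.length - 1) :=
                Nat.mul_le_mul_left _ hr1
            _ ≤ rr F w := hh
            _ ≤ n := hrw
        exact (Nat.le_log_iff_pow_le one_lt_two (by omega)).2 hpow
      omega
  refine ⟨by rw [one_mul]; exact hlow, ?_⟩
  have h1 : (Nat.log 2 n : ℝ) ≤ Real.logb 2 n := Real.natLog_le_logb n 2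
  calc (F.length : ℝ) ≤ ((5 * Nat.log 2 n : ℕ) : ℝ) := by exact_mod_cast hupper
    _ = 5 * (Nat.log 2 n : ℝ) := by push_cast; ring
    _ ≤ 5 * Real.logb 2 n := by linarith
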